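/- arXiv:2205.03179 — 4 statements merged into one kernel-verified Lean document; each statement's English description precedes it below -/
import Mathlib

section
/- For real constants α < 0, β ≠ 0 and k = ζ + iη with η > 0, the functions A(x,t) = 4η·sech(2η(x + αt/(4|k|²)))·exp(iζ(−2x + αt/(2|k|²))) and B(x,t) = −(2αη²/(β|k|²))·sech(η(2x + αt/(2|k|²)))² satisfy A_{xt} − αA − βAB = 0 and B_x + (1/(2β))∂_t(|A|²) = 0. -/
lemma sech_deriv {w : ℝ → ℝ} {w' x : ℝ} (hw : HasDerivAt w w' x) :
    HasDerivAt (fun y => 1 / Real.cosh (w y))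
      (-(w' * Real.sinh (w x)) / Real.cosh (w x) ^ 2) x := by
  have h : HasDerivAt (fun y => Real.cosh (w y)) (Real.sinh (w x) * w') x := by
    exact (Real.hasDerivAt_cosh (w x)).comp x hw
  have := (hasDerivAt_const x (1:ℝ)).div h (Real.cosh_pos (w x)).ne'
  refine this.congr_deriv ?_
  ring

lemma sdc_deriv {w : ℝ → ℝ} {w' x : ℝ} (hw : HasDerivAt w w' x) :
    HasDerivAt (fun y => Real.sinh (w y) / Real.cosh (w y) ^ 2)
      (w' * (2 - Real.cosh (w x) ^ 2) / Real.cosh (w x) ^ 3) x := by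
  have hs : HasDerivAt (fun y => Real.sinh (w y)) (Real.cosh (w x) * w') x := by
    exact (Real.hasDerivAt_sinh (w x)).comp x hw
  have hc : HasDerivAt (fun y => Real.cosh (w y)) (Real.sinh (w x) * w') x := by
    exact (Real.hasDerivAt_cosh (w x)).comp x hw
  have hc2 := hc.pow 2
  have := hs.div hc2 (pow_ne_zero 2 (Real.cosh_pos (w x)).ne')
  refine this.congr_deriv ?_
  have hid : Real.sinh (w x) ^ 2 = Real.cosh (w x) ^ 2 - 1 := Real.sinh_sq _
  have hcpos := (Real.cosh_pos (w x)).ne'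
  simp only [Pi.pow_apply]
  field_simp
  linear_combination (-2*w'*Real.cosh (w x)) * hid

lemma cexpw_deriv {w : ℝ → ℝ} {w' x : ℝ} (hw : HasDerivAt w w' x) (c : ℂ) :
    HasDerivAt (fun y : ℝ => Complex.exp (c * ((w y : ℝ) : ℂ)))
      (c * w' * Complex.exp (c * ((w x : ℝ) : ℂ))) x := by
  have h1 : HasDerivAt (fun y : ℝ => c * ((w y : ℝ) : ℂ)) (c * (w' : ℂ)) x :=
    hw.ofReal_comp.const_mul c
  have := h1.cexp
  convert this using 1
  ring

lemma mul_cexp_deriv {f : ℝ → ℝ} {f' : ℝ} {w : ℝ → ℝ} {w' x : ℝ}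
    (hf : HasDerivAt f f' x) (hw : HasDerivAt w w' x) (c : ℂ) :
    HasDerivAt (fun y : ℝ => ((f y : ℝ) : ℂ) * Complex.exp (c * ((w y : ℝ) : ℂ)))
      ((f' : ℂ) * Complex.exp (c * ((w x : ℝ) : ℂ))
        + ((f x : ℝ) : ℂ) * (c * w' * Complex.exp (c * ((w x : ℝ) : ℂ)))) x :=
  hf.ofReal_comp.mul (cexpw_deriv hw c)

lemma keyalg (a b z h X S E K : ℂ) (hb : b ≠ 0) (hX : X ≠ 0) (hK : K ≠ 0)
    (hKdef : K = z^2+h^2) :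
    (-8*h^2*(a*h/(2*K)*(2 - X^2)/X^3))*E
      + (-8*h^2*(S/X^2))*(Complex.I*z*(a/(2*K))*E)
      + (Complex.I*z*(-2)) * ((4*h*(-(a*h/(2*K)*S)/X^2))*E
          + (4*h*(1/X))*(Complex.I*z*(a/(2*K))*E))
      - a * ((4*h*(1/X))*E)
      - b * ((4*h*(1/X))*E) * (-(2*a*h^2/(b*K)) * (1/X)^2) = 0 := by
  have hI : Complex.I^2 = -1 := Complex.I_sq
  field_simp
  ring_nf
  simp only [hI]
  field_simp
  linear_combination (-(8:ℂ)*h*a*E*X^2) * hKdef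

noncomputable def uu (α ζ η x t : ℝ) : ℝ := 2*η*x + α*η/(2*(ζ^2+η^2))*t
noncomputable def pp (α ζ η x t : ℝ) : ℝ := -2*x + α/(2*(ζ^2+η^2))*t

lemma uu_x (α ζ η t x : ℝ) : HasDerivAt (fun y => uu α ζ η y t) (2*η) x := by
  unfold uu
  simpa using (((hasDerivAt_id x).const_mul (2*η)).add_const (α*η/(2*(ζ^2+η^2))*t))

lemma uu_t (α ζ η x t : ℝ) :
    HasDerivAt (fun s => uu α ζ η x s) (α*η/(2*(ζ^2+η^2))) t := by
  unfold uu
  simpa using (((hasDerivAt_id t).const_mul (α*η/(2*(ζ^2+η^2)))).const_add (2*η*x))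

lemma pp_x (α ζ η t x : ℝ) : HasDerivAt (fun y => pp α ζ η y t) (-2) x := by
  unfold pp
  simpa using (((hasDerivAt_id x).const_mul (-2:ℝ)).add_const (α/(2*(ζ^2+η^2))*t))

lemma pp_t (α ζ η x t : ℝ) :
    HasDerivAt (fun s => pp α ζ η x s) (α/(2*(ζ^2+η^2))) t := by
  unfold pp
  simpa using (((hasDerivAt_id t).const_mul (α/(2*(ζ^2+η^2)))).const_add (-2*x))

/-- The one-soliton solutions of the coupled dispersive AB system
(with βγ = 1) satisfy A_{xt} − αA − βAB = 0 and B_x + (1/(2β))∂_t(|A|²) = 0. -/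
theorem stmt1 (α β ζ η : ℝ) (hα : α < 0) (hβ : β ≠ 0) (hη : 0 < η)
    (A : ℝ → ℝ → ℂ) (B : ℝ → ℝ → ℝ)
    (hA : ∀ x t, A x t =
      (4 * η : ℝ) * (1 / Real.cosh (2 * η * (x + α * t / (4 * (ζ ^ 2 + η ^ 2))))) *
        Complex.exp (Complex.I * (ζ : ℂ) *
          ((-2 * x + α * t / (2 * (ζ ^ 2 + η ^ 2)) : ℝ) : ℂ)))
    (hB : ∀ x t, B x t =
      -(2 * α * η ^ 2 / (β * (ζ ^ 2 + η ^ 2))) *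
        (1 / Real.cosh (η * (2 * x + α * t / (2 * (ζ ^ 2 + η ^ 2))))) ^ 2) :
    (∀ x t, deriv (fun t' => deriv (fun x' => A x' t') x) t
        - (α : ℂ) * A x t - (β : ℂ) * A x t * (B x t : ℂ) = 0) ∧
    (∀ x t, deriv (fun x' => B x' t) x
        + (1 / (2 * β)) * deriv (fun t' => ‖A x t'‖ ^ 2) t = 0) := by
  have hK0 : (ζ^2+η^2 : ℝ) ≠ 0 := by positivity
  have hA' : ∀ x t, A x t =
      ((4*η*(1/Real.cosh (uu α ζ η x t)) : ℝ) : ℂ) *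
        Complex.exp (Complex.I * (ζ:ℂ) * ((pp α ζ η x t : ℝ) : ℂ)) := by
    intro x t
    rw [hA]
    have h1 : 2*η*(x + α*t/(4*(ζ^2+η^2))) = uu α ζ η x t := by
      unfold uu; field_simp; ring
    have h2 : -2*x + α*t/(2*(ζ^2+η^2)) = pp α ζ η x t := by
      unfold pp; ring
    rw [h1, h2]
    push_cast
    ring
  have hB' : ∀ x t, B x t =
      -(2*α*η^2/(β*(ζ^2+η^2))) * (1/Real.cosh (uu α ζ η x t))^2 := by
    intro x t
    rw [hB]
    have h1 : η*(2*x + α*t/(2*(ζ^2+η^2))) = uu α ζ η x t := by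
      unfold uu; field_simp
    rw [h1]
  have hcosh : ∀ x t : ℝ, Real.cosh (uu α ζ η x t) ≠ 0 :=
    fun x t => (Real.cosh_pos _).ne'
  have hAx : ∀ x t, deriv (fun x' => A x' t) x =
      ((-8*η^2*(Real.sinh (uu α ζ η x t)/Real.cosh (uu α ζ η x t)^2) : ℝ) : ℂ) *
        Complex.exp (Complex.I * (ζ:ℂ) * ((pp α ζ η x t : ℝ) : ℂ))
      + (Complex.I * (ζ:ℂ) * (-2)) *
        (((4*η*(1/Real.cosh (uu α ζ η x t)) : ℝ) : ℂ) *
          Complex.exp (Complex.I * (ζ:ℂ) * ((pp α ζ η x t : ℝ) : ℂ))) := by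
    intro x t
    have hfun : (fun x' => A x' t) = fun x' =>
        ((4*η*(1/Real.cosh (uu α ζ η x' t)) : ℝ) : ℂ) *
          Complex.exp (Complex.I * (ζ:ℂ) * ((pp α ζ η x' t : ℝ) : ℂ)) :=
      funext fun x' => hA' x' t
    have hf : HasDerivAt (fun y => 4*η*(1/Real.cosh (uu α ζ η y t)))
        (4*η*(-(2*η * Real.sinh (uu α ζ η x t))/Real.cosh (uu α ζ η x t)^2)) x :=
      (sech_deriv (uu_x α ζ η t x)).const_mul (4*η)
    have h := mul_cexp_deriv hf (pp_x α ζ η t x) (Complex.I * (ζ:ℂ))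
    rw [hfun, h.deriv]
    push_cast
    ring
  constructor
  · intro x t
    have hfun2 : (fun t' => deriv (fun x' => A x' t') x) = fun t' =>
        ((-8*η^2*(Real.sinh (uu α ζ η x t')/Real.cosh (uu α ζ η x t')^2) : ℝ) : ℂ) *
          Complex.exp (Complex.I * (ζ:ℂ) * ((pp α ζ η x t' : ℝ) : ℂ))
        + (Complex.I * (ζ:ℂ) * (-2)) *
          (((4*η*(1/Real.cosh (uu α ζ η x t')) : ℝ) : ℂ) *
            Complex.exp (Complex.I * (ζ:ℂ) * ((pp α ζ η x t' : ℝ) : ℂ))) :=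
      funext fun t' => hAx x t'
    have hf1 : HasDerivAt
        (fun t' => -8*η^2*(Real.sinh (uu α ζ η x t')/Real.cosh (uu α ζ η x t')^2))
        (-8*η^2*(α*η/(2*(ζ^2+η^2))*(2 - Real.cosh (uu α ζ η x t)^2)/Real.cosh (uu α ζ η x t)^3)) t :=
      (sdc_deriv (uu_t α ζ η x t)).const_mul (-8*η^2)
    have hf2 : HasDerivAt (fun t' => 4*η*(1/Real.cosh (uu α ζ η x t')))
        (4*η*(-(α*η/(2*(ζ^2+η^2)) * Real.sinh (uu α ζ η x t))/Real.cosh (uu α ζ η x t)^2)) t :=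
      (sech_deriv (uu_t α ζ η x t)).const_mul (4*η)
    have h := (mul_cexp_deriv hf1 (pp_t α ζ η x t) (Complex.I * (ζ:ℂ))).add
      ((mul_cexp_deriv hf2 (pp_t α ζ η x t) (Complex.I * (ζ:ℂ))).const_mul
        (Complex.I * (ζ:ℂ) * (-2)))
    rw [hfun2]
    erw [h.deriv]
    rw [hA' x t, hB' x t]
    have hc0' : ((Real.cosh (uu α ζ η x t) : ℝ) : ℂ) ≠ 0 := by
      exact_mod_cast hcosh x t
    have hK0' : ((ζ:ℂ)^2 + (η:ℂ)^2) ≠ 0 := by exact_mod_cast hK0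
    have hb' : (β:ℂ) ≠ 0 := by exact_mod_cast hβ
    have hccosh : Complex.cosh ((uu α ζ η x t : ℝ) : ℂ) ≠ 0 := by
      rw [← Complex.ofReal_cosh]; exact_mod_cast hcosh x t
    push_cast
    linear_combination keyalg (α:ℂ) (β:ℂ) (ζ:ℂ) (η:ℂ)
      (Complex.cosh ((uu α ζ η x t : ℝ) : ℂ)) (Complex.sinh ((uu α ζ η x t : ℝ) : ℂ))
      (Complex.exp (Complex.I * (ζ:ℂ) * ((pp α ζ η x t : ℝ) : ℂ)))
      ((ζ:ℂ)^2+(η:ℂ)^2) hb' hccosh hK0' rfl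
  · intro x t
    have hBfun : (fun x' => B x' t) = fun x' =>
        -(2*α*η^2/(β*(ζ^2+η^2))) * (1/Real.cosh (uu α ζ η x' t))^2 :=
      funext fun x' => hB' x' t
    have hB1 := ((sech_deriv (uu_x α ζ η t x)).pow 2).const_mul
      (-(2*α*η^2/(β*(ζ^2+η^2))))
    have hAbs : (fun t' => ‖A x t'‖^2) = fun t' =>
        (4*η*(1/Real.cosh (uu α ζ η x t')))^2 := by
      funext t'
      rw [hA' x t', norm_mul, Complex.norm_exp]
      have hre : (Complex.I * (ζ:ℂ) * ((pp α ζ η x t' : ℝ):ℂ)).re = 0 := by simp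
      rw [hre, Real.exp_zero, mul_one, Complex.norm_real, Real.norm_eq_abs, sq_abs]
    have hA2 := ((sech_deriv (uu_t α ζ η x t)).const_mul (4*η)).pow 2
    rw [hBfun]
    erw [hB1.deriv]
    rw [hAbs]
    erw [hA2.deriv]
    field_simp
    ring
end

section
/- For any constant c₂ > 0 and any η ∈ ℝ, ∫_0^∞ e^{−c₂ v t} / √|η − v| dv ≤ C t^{−1/2} for all t ≥ 1, where C depends only on c₂. -/
open MeasureTheory Set Real intervalIntegral

/-- `|u|^(-1/2)` splits as `u^(-1/2) + (-u)^(-1/2)` (rpow of negative base at -1/2 is 0). -/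
lemma abs_rpow_half_split (u : ℝ) :
    |u| ^ (-(1/2) : ℝ) = u ^ (-(1/2) : ℝ) + (-u) ^ (-(1/2) : ℝ) := by
  have hcos : Real.cos (-(1/2) * π) = 0 := by
    rw [show (-(1/2) : ℝ) * π = -(π/2) by ring, Real.cos_neg, Real.cos_pi_div_two]
  rcases lt_trichotomy u 0 with h | h | h
  · rw [abs_of_neg h, Real.rpow_def_of_neg h, hcos, mul_zero, zero_add]
  · simp [h, Real.zero_rpow (by norm_num : (-(1/2) : ℝ) ≠ 0)]
  · rw [abs_of_pos h, Real.rpow_def_of_neg (by linarith : -u < 0), hcos, mul_zero, add_zero]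

lemma abs_rpow_half_intervalIntegrable (a b : ℝ) :
    IntervalIntegrable (fun u : ℝ => |u| ^ (-(1/2) : ℝ)) volume a b := by
  have h1 : IntervalIntegrable (fun u : ℝ => u ^ (-(1/2) : ℝ)) volume a b :=
    intervalIntegral.intervalIntegrable_rpow' (by norm_num)
  have h2 : IntervalIntegrable (fun u : ℝ => (-u) ^ (-(1/2) : ℝ)) volume a b := by
    rw [IntervalIntegrable.iff_comp_neg]
    simpa using (intervalIntegral.intervalIntegrable_rpow' (by norm_num : (-1:ℝ) < -(1/2)) (a := -a) (b := -b))
  simpa only [← abs_rpow_half_split] using h1.add h2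

lemma integral_abs_rpow_half (δ : ℝ) (hδ : 0 < δ) :
    (∫ u in (-δ)..δ, |u| ^ (-(1/2) : ℝ)) = 4 * δ ^ ((1/2) : ℝ) := by
  have hneg : ((-δ) : ℝ) ^ ((1/2) : ℝ) = 0 := by
    rw [Real.rpow_def_of_neg (by linarith : (-δ : ℝ) < 0),
      show ((1/2) : ℝ) * π = π/2 by ring, Real.cos_pi_div_two, mul_zero]
  have key : (∫ u in (-δ)..δ, u ^ (-(1/2) : ℝ)) = 2 * δ ^ ((1/2) : ℝ) := by
    rw [integral_rpow (Or.inl (by norm_num)),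
      show (-(1/2) : ℝ) + 1 = 1/2 by norm_num, hneg]
    ring
  have h2 : (∫ u in (-δ)..δ, (-u) ^ (-(1/2) : ℝ)) = 2 * δ ^ ((1/2) : ℝ) := by
    rw [intervalIntegral.integral_comp_neg (fun u : ℝ => u ^ (-(1/2) : ℝ)), neg_neg, key]
  have h1 : IntervalIntegrable (fun u : ℝ => u ^ (-(1/2) : ℝ)) volume (-δ) δ :=
    intervalIntegral.intervalIntegrable_rpow' (by norm_num)
  have h2i : IntervalIntegrable (fun u : ℝ => (-u) ^ (-(1/2) : ℝ)) volume (-δ) δ := by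
    rw [IntervalIntegrable.iff_comp_neg]
    simpa using (intervalIntegral.intervalIntegrable_rpow' (by norm_num : (-1:ℝ) < -(1/2)) (a := δ) (b := -δ))
  calc (∫ u in (-δ)..δ, |u| ^ (-(1/2) : ℝ))
      = ∫ u in (-δ)..δ, (u ^ (-(1/2) : ℝ) + (-u) ^ (-(1/2) : ℝ)) := by
        simp_rw [abs_rpow_half_split]
    _ = 2 * δ ^ ((1/2) : ℝ) + 2 * δ ^ ((1/2) : ℝ) := by
        rw [intervalIntegral.integral_add h1 h2i, key, h2]
    _ = 4 * δ ^ ((1/2) : ℝ) := by ring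

/-- ∫_0^∞ e^{−c₂vt}/√|η−v| dv ≤ C t^{−1/2} for all η ∈ ℝ, t ≥ 1,
with C depending only on c₂. -/
theorem stmt11 (c₂ : ℝ) (hc₂ : 0 < c₂) :
    ∃ C > 0, ∀ η : ℝ, ∀ t ≥ (1 : ℝ),
      (∫ v in Set.Ioi (0 : ℝ), Real.exp (-c₂ * v * t) / Real.sqrt |η - v|)
        ≤ C * t ^ (-(1 / 2) : ℝ) := by
  refine ⟨1/c₂ + 4, by positivity, ?_⟩
  intro η t ht
  have ht0 : (0 : ℝ) < t := lt_of_lt_of_le one_pos ht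
  set δ : ℝ := 1/t with hδdef
  have hδ0 : 0 < δ := by positivity
  set b : ℝ := c₂ * t with hbdef
  have hb0 : 0 < b := mul_pos hc₂ ht0
  set g₂ : ℝ → ℝ := Set.indicator (Set.Icc (η - δ) (η + δ)) (fun v => |η - v| ^ (-(1/2) : ℝ))
    with hg₂def
  set g : ℝ → ℝ := fun v => t ^ ((1/2) : ℝ) * Real.exp (-b * v) + g₂ v with hgdef
  -- integrability of the two pieces of `g`
  have hg₁_int : IntegrableOn (fun v => t ^ ((1/2) : ℝ) * Real.exp (-b * v)) (Set.Ioi 0) :=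
    (exp_neg_integrableOn_Ioi 0 hb0).const_mul _
  have hii : IntervalIntegrable (fun v : ℝ => |η - v| ^ (-(1/2) : ℝ)) volume (η - δ) (η + δ) := by
    have := (abs_rpow_half_intervalIntegrable (η - (η - δ)) (η - (η + δ))).comp_sub_left η
    simpa using this
  have hIcc_int : IntegrableOn (fun v : ℝ => |η - v| ^ (-(1/2) : ℝ))
      (Set.Icc (η - δ) (η + δ)) := by
    rw [← intervalIntegrable_iff_integrableOn_Icc_of_le (by linarith)]
    exact hii
  have hg₂_int : Integrable g₂ := by
    rw [hg₂def, integrable_indicator_iff measurableSet_Icc]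
    exact hIcc_int
  have hg_int : IntegrableOn g (Set.Ioi 0) := hg₁_int.add hg₂_int.restrict
  have hg₂_nonneg : ∀ v, 0 ≤ g₂ v := fun v =>
    Set.indicator_nonneg (fun x _ => Real.rpow_nonneg (abs_nonneg _) _) v
  -- pointwise bound on `Ioi 0`
  have hmono : ∀ v ∈ Set.Ioi (0:ℝ),
      Real.exp (-c₂ * v * t) / Real.sqrt |η - v| ≤ g v := by
    intro v hv
    have hv0 : 0 < v := hv
    have habs : (0:ℝ) ≤ |η - v| := abs_nonneg _
    by_cases hcase : |η - v| < δ
    · rcases eq_or_lt_of_le habs with h0 | h0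
      · rw [← h0, Real.sqrt_zero, div_zero]
        exact add_nonneg (by positivity) (hg₂_nonneg v)
      · have hmem : v ∈ Set.Icc (η - δ) (η + δ) := by
          rw [abs_lt] at hcase
          constructor <;> linarith [hcase.1, hcase.2]
        have hexp : Real.exp (-c₂ * v * t) ≤ 1 := by
          apply Real.exp_le_one_iff.mpr
          have : 0 < c₂ * v * t := by positivity
          linarith
        have hsq : 0 < Real.sqrt |η - v| := Real.sqrt_pos.mpr h0
        have step1 : Real.exp (-c₂ * v * t) / Real.sqrt |η - v|
            ≤ 1 / Real.sqrt |η - v| := by gcongr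
        have step2 : 1 / Real.sqrt |η - v| = |η - v| ^ (-(1/2) : ℝ) := by
          rw [Real.sqrt_eq_rpow, one_div, ← Real.rpow_neg habs]
        have step3 : g₂ v = |η - v| ^ (-(1/2) : ℝ) := Set.indicator_of_mem hmem _
        calc Real.exp (-c₂ * v * t) / Real.sqrt |η - v|
            ≤ |η - v| ^ (-(1/2) : ℝ) := step2 ▸ step1
          _ = g₂ v := step3.symm
          _ ≤ g v := le_add_of_nonneg_left (by positivity)
    · push_neg at hcase
      have hsq : Real.sqrt δ ≤ Real.sqrt |η - v| := Real.sqrt_le_sqrt hcase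
      have hsδ : 0 < Real.sqrt δ := Real.sqrt_pos.mpr hδ0
      have step1 : Real.exp (-c₂ * v * t) / Real.sqrt |η - v|
          ≤ Real.exp (-c₂ * v * t) / Real.sqrt δ := by gcongr
      have step2 : Real.exp (-c₂ * v * t) / Real.sqrt δ
          = t ^ ((1/2) : ℝ) * Real.exp (-b * v) := by
        rw [hδdef, one_div, Real.sqrt_inv, div_eq_mul_inv, inv_inv, Real.sqrt_eq_rpow,
          show -c₂ * v * t = -b * v by rw [hbdef]; ring, mul_comm]
      calc Real.exp (-c₂ * v * t) / Real.sqrt |η - v|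
          ≤ t ^ ((1/2) : ℝ) * Real.exp (-b * v) := step2 ▸ step1
        _ ≤ g v := le_add_of_nonneg_right (hg₂_nonneg v)
  -- value of ∫ g₁
  have hexp_int : (∫ x in Set.Ioi (0:ℝ), Real.exp (-b * x)) = b⁻¹ := by
    have h := integral_comp_mul_left_Ioi (fun x => Real.exp (-x)) 0 hb0
    simp only [mul_zero, neg_zero, integral_exp_neg_Ioi, smul_eq_mul, neg_mul] at h ⊢
    rw [h, Real.exp_zero, mul_one]
  -- bound on ∫ g₂
  have hg₂_val : (∫ v in Set.Ioi (0:ℝ), g₂ v) ≤ 4 * t ^ (-(1/2) : ℝ) := by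
    have h1 : (∫ v in Set.Ioi (0:ℝ), g₂ v) ≤ ∫ v, g₂ v :=
      setIntegral_le_integral hg₂_int (Filter.Eventually.of_forall hg₂_nonneg)
    have h2 : (∫ v, g₂ v) = ∫ v in Set.Icc (η - δ) (η + δ), |η - v| ^ (-(1/2) : ℝ) := by
      rw [hg₂def, MeasureTheory.integral_indicator measurableSet_Icc]
    have h3 : (∫ v in Set.Icc (η - δ) (η + δ), |η - v| ^ (-(1/2) : ℝ))
        = ∫ v in (η - δ)..(η + δ), |η - v| ^ (-(1/2) : ℝ) := by
      rw [integral_Icc_eq_integral_Ioc, ← intervalIntegral.integral_of_le (by linarith)]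
    have h4 : (∫ v in (η - δ)..(η + δ), |η - v| ^ (-(1/2) : ℝ))
        = ∫ u in (-δ)..δ, |u| ^ (-(1/2) : ℝ) := by
      have := intervalIntegral.integral_comp_sub_left
        (a := η - δ) (b := η + δ) (fun u : ℝ => |u| ^ (-(1/2) : ℝ)) η
      simpa using this
    have h5 : δ ^ ((1/2) : ℝ) = t ^ (-(1/2) : ℝ) := by
      rw [hδdef, one_div, ← Real.rpow_neg_one t, ← Real.rpow_mul ht0.le]
      norm_num
    rw [h2, h3, h4, integral_abs_rpow_half δ hδ0, h5] at h1
    linarith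
  -- put everything together
  have hpow : t ^ ((1/2) : ℝ) * b⁻¹ = (1/c₂) * t ^ (-(1/2) : ℝ) := by
    have h1 : t ^ ((1/2) : ℝ) * t⁻¹ = t ^ (-(1/2) : ℝ) := by
      rw [← Real.rpow_neg_one t, ← Real.rpow_add ht0]
      norm_num
    rw [hbdef, mul_inv]
    calc t ^ ((1/2) : ℝ) * (c₂⁻¹ * t⁻¹) = (t ^ ((1/2) : ℝ) * t⁻¹) * c₂⁻¹ := by ring
      _ = (1/c₂) * t ^ (-(1/2) : ℝ) := by rw [h1, one_div]; ring
  calc (∫ v in Set.Ioi (0 : ℝ), Real.exp (-c₂ * v * t) / Real.sqrt |η - v|)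
      ≤ ∫ v in Set.Ioi (0:ℝ), g v := by
        refine integral_mono_of_nonneg (Filter.Eventually.of_forall fun v => by positivity)
          hg_int ?_
        exact (ae_restrict_mem measurableSet_Ioi).mono hmono
    _ = (∫ v in Set.Ioi (0:ℝ), t ^ ((1/2) : ℝ) * Real.exp (-b * v))
        + ∫ v in Set.Ioi (0:ℝ), g₂ v := integral_add hg₁_int hg₂_int.restrict
    _ = t ^ ((1/2) : ℝ) * b⁻¹ + ∫ v in Set.Ioi (0:ℝ), g₂ v := by
        rw [MeasureTheory.integral_const_mul, hexp_int]
    _ ≤ (1/c₂) * t ^ (-(1/2) : ℝ) + 4 * t ^ (-(1/2) : ℝ) := by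
        rw [hpow]; linarith
    _ = (1/c₂ + 4) * t ^ (-(1 / 2) : ℝ) := by ring
end

section
/- For η > 0, p > 2 and q with 1/p + 1/q = 1 and c₁ > 0, the integral ∫_0^η v^{1/p − 1/2}(η − v)^{1/q − 1} e^{−c₁ v² t} dv satisfies the bound ≤ C t^{−1/4} for all t ≥ 1, where C is independent of η and t. -/
open MeasureTheory Set Real

lemma stmt13_exp_le {x : ℝ} (hx : 0 < x) : Real.exp (-x) ≤ x ^ (-(1/4) : ℝ) := by
  rw [Real.exp_neg, Real.rpow_neg hx.le]
  apply inv_anti₀ (Real.rpow_pos_of_pos hx _)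
  rcases le_total x 1 with h | h
  · calc x ^ ((1:ℝ)/4) ≤ 1 := Real.rpow_le_one hx.le h (by norm_num)
      _ ≤ Real.exp x := by linarith [Real.add_one_le_exp x, hx.le]
  · calc x ^ ((1:ℝ)/4) ≤ x ^ (1:ℝ) := Real.rpow_le_rpow_of_exponent_le h (by norm_num)
      _ = x := Real.rpow_one x
      _ ≤ Real.exp x := by linarith [Real.add_one_le_exp x]

lemma stmt13_integrable {α β η : ℝ} (hα : 0 < α) (hα1 : α ≤ 1) (hβ : 0 < β) (hβ1 : β ≤ 1) (hη : 0 < η) :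
    IntegrableOn (fun v => v ^ (α - 1) * (η - v) ^ (β - 1)) (Set.Ioo 0 η) := by
  have hm : Measurable (fun v : ℝ => v ^ (α - 1) * (η - v) ^ (β - 1)) := by fun_prop
  have h1 : IntegrableOn (fun v => v ^ (α - 1) * (η - v) ^ (β - 1)) (Set.Ioc 0 (η/2)) := by
    have hmaj : IntegrableOn (fun v : ℝ => v ^ (α - 1) * (η/2) ^ (β - 1)) (Set.Ioc 0 (η/2)) := by
      have h0 : IntervalIntegrable (fun x : ℝ => x ^ (α - 1)) volume 0 (η/2) :=
        intervalIntegral.intervalIntegrable_rpow' (by linarith)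
      rw [intervalIntegrable_iff_integrableOn_Ioc_of_le (by linarith)] at h0
      exact h0.mul_const _
    refine hmaj.mono' hm.aestronglyMeasurable ?_
    filter_upwards [ae_restrict_mem measurableSet_Ioc] with v hv
    have hv0 : 0 < v := hv.1
    have hηv : η/2 ≤ η - v := by linarith [hv.2]
    rw [Real.norm_eq_abs, abs_of_nonneg (mul_nonneg (Real.rpow_nonneg hv0.le _)
      (Real.rpow_nonneg (by linarith) _))]
    exact mul_le_mul_of_nonneg_left
      (Real.rpow_le_rpow_of_nonpos (by linarith) hηv (by linarith))
      (Real.rpow_nonneg hv0.le _)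
  have h2 : IntegrableOn (fun v => v ^ (α - 1) * (η - v) ^ (β - 1)) (Set.Ioc (η/2) η) := by
    have hmaj : IntegrableOn (fun v : ℝ => (η/2) ^ (α - 1) * (η - v) ^ (β - 1))
        (Set.Ioc (η/2) η) := by
      have h0 : IntervalIntegrable (fun x : ℝ => x ^ (β - 1)) volume 0 (η/2) :=
        intervalIntegral.intervalIntegrable_rpow' (by linarith)
      have h1' := (h0.comp_sub_left η).symm
      have : (η - 0 : ℝ) = η := by ring
      rw [this, show η - η/2 = η/2 by ring] at h1'
      rw [intervalIntegrable_iff_integrableOn_Ioc_of_le (by linarith)] at h1'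
      exact h1'.const_mul _
    refine hmaj.mono' hm.aestronglyMeasurable ?_
    filter_upwards [ae_restrict_mem measurableSet_Ioc] with v hv
    have hv0 : (0:ℝ) < η/2 := by linarith
    have hv2 : η/2 ≤ v := hv.1.le
    have hηv : 0 ≤ η - v := by linarith [hv.2]
    rw [Real.norm_eq_abs, abs_of_nonneg (mul_nonneg (Real.rpow_nonneg (by linarith) _)
      (Real.rpow_nonneg hηv _))]
    exact mul_le_mul_of_nonneg_right
      (Real.rpow_le_rpow_of_nonpos hv0 hv2 (by linarith))
      (Real.rpow_nonneg hηv _)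
  have hsub : Set.Ioo 0 η ⊆ Set.Ioc 0 (η/2) ∪ Set.Ioc (η/2) η := by
    rw [Set.Ioc_union_Ioc_eq_Ioc (by linarith) (by linarith)]
    exact Set.Ioo_subset_Ioc_self
  exact (h1.union h2).mono_set hsub

lemma stmt13_scaled (α β : ℝ) {a : ℝ} (ha : 0 < a) :
    ∫ x in (0:ℝ)..a, x ^ (α - 1) * (a - x) ^ (β - 1) =
      a ^ (α + β - 1) * ∫ x in (0:ℝ)..1, x ^ (α - 1) * (1 - x) ^ (β - 1) := by
  have A : a ^ (α + β - 1) = a * (a ^ (α - 1) * a ^ (β - 1)) := by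
    rw [show α + β - 1 = 1 + (α - 1) + (β - 1) by ring, Real.rpow_add ha, Real.rpow_add ha,
      Real.rpow_one, mul_assoc]
  have key : (∫ x in (0:ℝ)..a, (x/a) ^ (α - 1) * (1 - x/a) ^ (β - 1)) =
      a • ∫ x in (0:ℝ)..1, x ^ (α - 1) * (1 - x) ^ (β - 1) := by
    have h := intervalIntegral.integral_comp_div (a := (0:ℝ)) (b := a)
      (fun y : ℝ => y ^ (α - 1) * (1 - y) ^ (β - 1)) ha.ne'
    rw [zero_div, div_self ha.ne'] at h
    exact h
  calc (∫ x in (0:ℝ)..a, x ^ (α - 1) * (a - x) ^ (β - 1))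
      = ∫ x in (0:ℝ)..a, (a ^ (α - 1) * a ^ (β - 1)) * ((x/a) ^ (α - 1) * (1 - x/a) ^ (β - 1)) := by
        simp_rw [intervalIntegral.integral_of_le ha.le]
        refine setIntegral_congr_fun measurableSet_Ioc fun x hx => ?_
        have hx0 : 0 ≤ x := hx.1.le
        have hxa : x ≤ a := hx.2
        have ha1 : (0:ℝ) < a ^ (α - 1) := Real.rpow_pos_of_pos ha _
        have ha2 : (0:ℝ) < a ^ (β - 1) := Real.rpow_pos_of_pos ha _
        rw [Real.div_rpow hx0 ha.le, show (1 : ℝ) - x / a = (a - x)/a by field_simp,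
          Real.div_rpow (by linarith) ha.le]
        field_simp
    _ = (a ^ (α - 1) * a ^ (β - 1)) * ∫ x in (0:ℝ)..a, (x/a) ^ (α - 1) * (1 - x/a) ^ (β - 1) :=
        intervalIntegral.integral_const_mul _ _
    _ = a ^ (α + β - 1) * ∫ x in (0:ℝ)..1, x ^ (α - 1) * (1 - x) ^ (β - 1) := by
        rw [key, smul_eq_mul, A]; ring


/-- For p > 2, 1/p + 1/q = 1 and c₁ > 0, the integral
∫_0^η v^{1/p−1/2}(η−v)^{1/q−1} e^{−c₁v²t} dv is ≤ C t^{−1/4} for all t ≥ 1,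
uniformly in η > 0. -/
theorem stmt13 (p q c₁ : ℝ) (hp : 2 < p) (hpq : 1 / p + 1 / q = 1) (hc₁ : 0 < c₁) :
    ∃ C > 0, ∀ η > (0 : ℝ), ∀ t ≥ (1 : ℝ),
      (∫ v in Set.Ioo 0 η,
          v ^ (1 / p - 1 / 2) * (η - v) ^ (1 / q - 1) * Real.exp (-c₁ * v ^ 2 * t))
        ≤ C * t ^ (-(1 / 4) : ℝ) := by
  have hp0 : (0:ℝ) < p := by linarith
  set α : ℝ := 1 / p with hα_def
  have hα0 : 0 < α := by positivity
  have hα2 : α < 1/2 := by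
    rw [hα_def]
    rw [div_lt_div_iff₀ hp0 (by norm_num)]
    linarith
  set β : ℝ := 1 - α with hβ_def
  have hβ0 : 0 < β := by simp only [hβ_def]; linarith
  have hβ1 : β ≤ 1 := by simp only [hβ_def]; linarith
  have hq : 1 / q = β := by simp only [hβ_def]; linarith
  set B : ℝ := ∫ v in Set.Ioo (0:ℝ) 1, v ^ (α - 1) * (1 - v) ^ (β - 1) with hB_def
  have hB0 : 0 ≤ B := by
    refine setIntegral_nonneg measurableSet_Ioo fun v hv => ?_
    exact mul_nonneg (Real.rpow_nonneg hv.1.le _) (Real.rpow_nonneg (by linarith [hv.2]) _)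
  refine ⟨c₁ ^ (-(1/4) : ℝ) * (B + 1), by positivity, fun η hη t ht => ?_⟩
  have ht0 : (0:ℝ) < t := by linarith
  have ht4 : (0:ℝ) < t ^ (-(1/4) : ℝ) := Real.rpow_pos_of_pos ht0 _
  have hc4 : (0:ℝ) < c₁ ^ (-(1/4) : ℝ) := Real.rpow_pos_of_pos hc₁ _
  set K : ℝ := c₁ ^ (-(1/4) : ℝ) * t ^ (-(1/4) : ℝ) with hK_def
  have hgi : IntegrableOn (fun v => v ^ (α - 1) * (η - v) ^ (β - 1)) (Set.Ioo 0 η) :=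
    stmt13_integrable hα0 (by linarith) hβ0 hβ1 hη
  have step1 : (∫ v in Set.Ioo 0 η,
        v ^ (1 / p - 1 / 2) * (η - v) ^ (1 / q - 1) * Real.exp (-c₁ * v ^ 2 * t))
      ≤ ∫ v in Set.Ioo 0 η, K * (v ^ (α - 1) * (η - v) ^ (β - 1)) := by
    refine integral_mono_of_nonneg ?_ (hgi.const_mul K) ?_
    · filter_upwards [ae_restrict_mem measurableSet_Ioo] with v hv
      have h1 : 0 ≤ v := hv.1.le
      have h2 : 0 ≤ η - v := by linarith [hv.2]
      positivity
    · filter_upwards [ae_restrict_mem measurableSet_Ioo] with v hv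
      have hv0 : 0 < v := hv.1
      have hηv : 0 ≤ η - v := by linarith [hv.2]
      have hx : 0 < c₁ * v ^ 2 * t := by positivity
      have hexp : Real.exp (-c₁ * v ^ 2 * t) ≤ c₁ ^ (-(1/4):ℝ) * v ^ (-(1/2):ℝ) * t ^ (-(1/4):ℝ) := by
        have h := stmt13_exp_le hx
        rw [show -c₁ * v ^ 2 * t = -(c₁ * v ^ 2 * t) by ring]
        refine h.trans_eq ?_
        rw [Real.mul_rpow (by positivity) ht0.le, Real.mul_rpow hc₁.le (by positivity)]
        congr 1
        rw [← Real.rpow_natCast v 2, ← Real.rpow_mul hv0.le]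
        norm_num
      calc v ^ (1 / p - 1 / 2) * (η - v) ^ (1 / q - 1) * Real.exp (-c₁ * v ^ 2 * t)
          ≤ v ^ (1 / p - 1 / 2) * (η - v) ^ (1 / q - 1)
            * (c₁ ^ (-(1/4):ℝ) * v ^ (-(1/2):ℝ) * t ^ (-(1/4):ℝ)) := by
            refine mul_le_mul_of_nonneg_left hexp ?_
            exact mul_nonneg (Real.rpow_nonneg hv0.le _) (Real.rpow_nonneg hηv _)
        _ = K * (v ^ (α - 1) * (η - v) ^ (β - 1)) := by
            rw [hK_def, show (1:ℝ)/q - 1 = β - 1 by rw [hq],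
              show (1:ℝ)/p - 1/2 = α - 1/2 from rfl,
              show α - 1 = (α - 1/2) + (-(1/2)) by ring, Real.rpow_add hv0]
            ring
  have step2 : (∫ v in Set.Ioo 0 η, K * (v ^ (α - 1) * (η - v) ^ (β - 1))) = K * B := by
    rw [integral_const_mul]
    congr 1
    have h1 : (∫ v in Set.Ioo 0 η, v ^ (α - 1) * (η - v) ^ (β - 1))
        = ∫ v in (0:ℝ)..η, v ^ (α - 1) * (η - v) ^ (β - 1) := by
      rw [intervalIntegral.integral_of_le hη.le, integral_Ioc_eq_integral_Ioo]
    have h2 : B = ∫ v in (0:ℝ)..1, v ^ (α - 1) * (1 - v) ^ (β - 1) := by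
      rw [intervalIntegral.integral_of_le zero_le_one, integral_Ioc_eq_integral_Ioo]
    rw [h1, h2, stmt13_scaled α β hη, show α + β - 1 = 0 by simp [hβ_def],
      Real.rpow_zero, one_mul]
  rw [step2] at step1
  refine step1.trans ?_
  rw [hK_def]
  have : c₁ ^ (-(1/4):ℝ) * t ^ (-(1/4):ℝ) * B ≤ c₁ ^ (-(1/4):ℝ) * t ^ (-(1/4):ℝ) * (B + 1) := by
    nlinarith
  linarith [this]
end

section
/- For ν ∈ ℝ, the Weber (parabolic cylinder) coefficients Ξ₁₂ = √(2π) e^{iπ/4} e^{−πν/2} / (r₀ Γ(−iν)) and Ξ₂₁ = −√(2π) e^{−iπ/4} e^{−πν/2} / (conj(r₀) Γ(iν)) satisfy Ξ₁₂ · Ξ₂₁ = ν, provided r₀ ∈ ℂ \ {0} and ν = −(1/(2π)) log(1 + |r₀|²). -/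
/-- The parabolic cylinder coefficients Ξ₁₂, Ξ₂₁ satisfy
Ξ₁₂·Ξ₂₁ = ν where ν = −(1/(2π)) log(1+|r₀|²), r₀ ≠ 0. -/
theorem stmt19 (r₀ : ℂ) (hr₀ : r₀ ≠ 0) (ν : ℝ)
    (hν : ν = -(1 / (2 * Real.pi)) * Real.log (1 + ‖r₀‖ ^ 2)) :
    ((Real.sqrt (2 * Real.pi) : ℂ) * Complex.exp (Complex.I * Real.pi / 4) *
        (Real.exp (-Real.pi * ν / 2) : ℂ) / (r₀ * Complex.Gamma (-Complex.I * ν))) *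
      (-((Real.sqrt (2 * Real.pi) : ℂ) * Complex.exp (-Complex.I * Real.pi / 4) *
        (Real.exp (-Real.pi * ν / 2) : ℂ)) /
          (starRingEnd ℂ r₀ * Complex.Gamma (Complex.I * ν)))
      = (ν : ℂ) := by
  have hπ := Real.pi_pos
  have habs : (0:ℝ) < ‖r₀‖ ^ 2 := by
    have := norm_pos_iff.mpr hr₀; positivity
  have hνneg : ν < 0 := by
    rw [hν]
    have h1 : 0 < Real.log (1 + ‖r₀‖ ^ 2) := Real.log_pos (by linarith)
    have h2 : 0 < 1/(2*Real.pi) := by positivity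
    nlinarith
  have hν0 : ν ≠ 0 := ne_of_lt hνneg
  have hexp : Real.exp (-(2*Real.pi*ν)) = 1 + ‖r₀‖ ^ 2 := by
    rw [hν, show -(2*Real.pi * (-(1/(2*Real.pi)) * Real.log (1+‖r₀‖^2)))
        = Real.log (1+‖r₀‖^2) by field_simp]
    exact Real.exp_log (by linarith)
  have hIν : Complex.I * (ν:ℂ) ≠ 0 := by
    simp [Complex.I_ne_zero, Complex.ofReal_eq_zero, hν0]
  have hG1 : Complex.Gamma (Complex.I * ν) ≠ 0 := by
    apply Complex.Gamma_ne_zero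
    intro n h
    apply hν0
    have := congrArg Complex.im h
    simpa using this
  have hG2 : Complex.Gamma (-Complex.I * ν) ≠ 0 := by
    apply Complex.Gamma_ne_zero
    intro n h
    apply hν0
    have := congrArg Complex.im h
    simpa using this
  have hsinhneg : Real.sinh (Real.pi * ν) < 0 := Real.sinh_neg_iff.mpr (by nlinarith)
  have hsinh : Real.sinh (Real.pi * ν) ≠ 0 := ne_of_lt hsinhneg
  set s : ℝ := Real.sinh (Real.pi * ν) with hs
  -- Gamma reflection
  have hrefl := Complex.Gamma_mul_Gamma_one_sub (Complex.I * ν)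
  have hadd : Complex.Gamma (1 - Complex.I * ν) = (-Complex.I * ν) * Complex.Gamma (-Complex.I * ν) := by
    have := Complex.Gamma_add_one (-Complex.I * ν) (by simpa using hIν)
    rw [show (1 : ℂ) - Complex.I * ν = -Complex.I * ν + 1 by ring]
    exact this
  have hsin : Complex.sin ((Real.pi : ℂ) * (Complex.I * ν)) = (s : ℂ) * Complex.I := by
    rw [show (Real.pi : ℂ) * (Complex.I * ν) = ((Real.pi * ν : ℝ) : ℂ) * Complex.I by push_cast; ring,
      Complex.sin_mul_I, Complex.ofReal_sinh]
  rw [hadd, hsin] at hrefl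
  have hsIne : ((s : ℂ) * Complex.I) ≠ 0 :=
    mul_ne_zero (Complex.ofReal_ne_zero.mpr hsinh) Complex.I_ne_zero
  rw [eq_div_iff hsIne] at hrefl
  -- hrefl : Γ(Iν) * (-Iν * Γ(-Iν)) * (s*I) = π
  have hGprod : Complex.Gamma (Complex.I * ν) * Complex.Gamma (-Complex.I * ν)
      = (Real.pi : ℂ) / ((ν : ℂ) * (s : ℂ)) := by
    rw [eq_div_iff (mul_ne_zero (Complex.ofReal_ne_zero.mpr hν0) (Complex.ofReal_ne_zero.mpr hsinh))]
    linear_combination hrefl + Complex.Gamma (Complex.I * ν) * Complex.Gamma (-Complex.I * ν) *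
      (ν : ℂ) * (s : ℂ) * Complex.I_sq
  -- simplify exponentials
  have he1 : Complex.exp (Complex.I * Real.pi / 4) * Complex.exp (-Complex.I * Real.pi / 4) = 1 := by
    rw [← Complex.exp_add, show Complex.I * (Real.pi:ℂ) / 4 + -Complex.I * (Real.pi:ℂ) / 4 = 0 by ring,
      Complex.exp_zero]
  have he2 : ((Real.exp (-Real.pi * ν / 2) : ℝ) : ℂ) * ((Real.exp (-Real.pi * ν / 2) : ℝ) : ℂ)
      = ((Real.exp (-(Real.pi * ν)) : ℝ) : ℂ) := by
    rw [← Complex.ofReal_mul, ← Real.exp_add]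
    ring_nf
  have hsq : ((Real.sqrt (2*Real.pi) : ℝ) : ℂ) * ((Real.sqrt (2*Real.pi) : ℝ) : ℂ) = ((2*Real.pi : ℝ) : ℂ) := by
    rw [← Complex.ofReal_mul, Real.mul_self_sqrt (by positivity)]
  have hconj : r₀ * starRingEnd ℂ r₀ = ((‖r₀‖ ^ 2 : ℝ) : ℂ) := by
    rw [Complex.mul_conj]
    push_cast [Complex.sq_norm]
    rfl
  rw [div_mul_div_comm]
  rw [show ((Real.sqrt (2 * Real.pi) : ℂ) * Complex.exp (Complex.I * Real.pi / 4) *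
        (Real.exp (-Real.pi * ν / 2) : ℂ)) *
      (-((Real.sqrt (2 * Real.pi) : ℂ) * Complex.exp (-Complex.I * Real.pi / 4) *
        (Real.exp (-Real.pi * ν / 2) : ℂ)))
      = -(((Real.sqrt (2*Real.pi) : ℂ) * (Real.sqrt (2*Real.pi) : ℂ)) *
          (Complex.exp (Complex.I * Real.pi / 4) * Complex.exp (-Complex.I * Real.pi / 4)) *
          (((Real.exp (-Real.pi * ν / 2) : ℝ) : ℂ) * ((Real.exp (-Real.pi * ν / 2) : ℝ) : ℂ))) by ring,
    hsq, he1, he2]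
  rw [show r₀ * Complex.Gamma (-Complex.I * ↑ν) * (starRingEnd ℂ r₀ * Complex.Gamma (Complex.I * ↑ν))
      = (r₀ * starRingEnd ℂ r₀) * (Complex.Gamma (Complex.I * ν) * Complex.Gamma (-Complex.I * ν)) by ring,
    hconj, hGprod]
  -- now everything is real casts
  have e1 : Real.exp (-(Real.pi*ν)) * Real.exp (Real.pi*ν) = 1 := by
    rw [← Real.exp_add]; simp
  have e2 : Real.exp (-(Real.pi*ν)) * Real.exp (-(Real.pi*ν)) = 1 + ‖r₀‖ ^ 2 := by
    rw [← Real.exp_add, show -(Real.pi*ν) + -(Real.pi*ν) = -(2*Real.pi*ν) by ring, hexp]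
  have key : (-(2*Real.pi*Real.exp (-(Real.pi*ν)))) * s = ‖r₀‖ ^ 2 * Real.pi := by
    rw [hs, Real.sinh_eq]
    linear_combination Real.pi * e2 - Real.pi * e1
  have hne : (‖r₀‖ ^ 2 * (Real.pi / (ν * s)) : ℝ) ≠ 0 := by
    apply mul_ne_zero (ne_of_gt habs)
    exact div_ne_zero (ne_of_gt hπ) (mul_ne_zero hν0 hsinh)
  have hR : -(((2*Real.pi : ℝ)) * 1 * (Real.exp (-(Real.pi * ν)))) /
      ((‖r₀‖ ^ 2) * (Real.pi / (ν * s))) = ν := by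
    rw [div_eq_iff hne]
    have h4 : ν * (‖r₀‖ ^ 2 * (Real.pi / (ν * s))) = ‖r₀‖ ^ 2 * Real.pi / s := by
      field_simp
    rw [h4, eq_div_iff hsinh]
    linear_combination key
  calc -(((2*Real.pi : ℝ) : ℂ) * 1 * ((Real.exp (-(Real.pi * ν)) : ℝ) : ℂ)) /
        (((‖r₀‖ ^ 2 : ℝ) : ℂ) * ((Real.pi : ℝ) / ((ν:ℂ) * (s:ℂ))))
      = ((-(((2*Real.pi : ℝ)) * 1 * (Real.exp (-(Real.pi * ν)))) /
        ((‖r₀‖ ^ 2) * (Real.pi / (ν * s))) : ℝ) : ℂ) := by push_cast; ring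
    _ = (ν : ℂ) := by rw [hR]
end
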